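/- Let D ≥ 1 be an integer, g_c := D^D/(D+1)^{D+1}, and let G_LO : [0, g_c] → ℝ assign to each g the unique solution G ∈ [1, (D+1)/D] of G = 1 + g·G^{D+1}. Then on the open interval (0, g_c), one has 1 − g·D·G_LO(g)^{D+1} = (D+1) − D·G_LO(g) > 0, and G_LO is differentiable with derivative G_LO'(g) = G_LO(g)^{D+2} / (1 − g·D·G_LO(g)^{D+1}). -/

import Mathlib

/-- Let `D ≥ 1`, `g_c := D^D/(D+1)^(D+1)`, and let `G_LO : [0, g_c] → ℝ` assign to
each `g` the unique solution `G ∈ [1, (D+1)/D]` of `G = 1 + g·G^(D+1)`. Then on `(0, g_c)` one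
has `1 − g·D·G_LO(g)^(D+1) = (D+1) − D·G_LO(g) > 0`, and `G_LO` is differentiable with
derivative `G_LO'(g) = G_LO(g)^(D+2) / (1 − g·D·G_LO(g)^(D+1))`. -/
theorem melonic_two_point_derivative (D : ℕ) (hD : 1 ≤ D) (G_LO : ℝ → ℝ)
    (hG : ∀ g ∈ Set.Icc (0 : ℝ) ((D : ℝ) ^ D / ((D : ℝ) + 1) ^ (D + 1)),
      G_LO g ∈ Set.Icc (1 : ℝ) (((D : ℝ) + 1) / D) ∧ G_LO g = 1 + g * (G_LO g) ^ (D + 1)) :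
    ∀ g ∈ Set.Ioo (0 : ℝ) ((D : ℝ) ^ D / ((D : ℝ) + 1) ^ (D + 1)),
      (1 - g * D * (G_LO g) ^ (D + 1) = ((D : ℝ) + 1) - D * G_LO g) ∧
      (0 < 1 - g * D * (G_LO g) ^ (D + 1)) ∧
      HasDerivAt G_LO ((G_LO g) ^ (D + 2) / (1 - g * D * (G_LO g) ^ (D + 1))) g := by
  have hD1 : (1:ℝ) ≤ D := by exact_mod_cast hD
  have hD0 : (0:ℝ) < D := by linarith
  set b : ℝ := ((D:ℝ)+1)/D with hbdef
  set gc : ℝ := (D:ℝ)^D / ((D:ℝ)+1)^(D+1) with hgcdef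
  have hb1 : 1 < b := by rw [hbdef, lt_div_iff₀ hD0]; linarith
  set φ : ℝ → ℝ := fun G => (G - 1) / G ^ (D+1) with hφdef
  -- derivative of φ
  have hder : ∀ G : ℝ, 0 < G →
      HasDerivAt φ ((((D:ℝ)+1) - D*G)/G^(D+2)) G := by
    intro G hGpos
    have h1 : HasDerivAt (fun x : ℝ => x - 1) 1 G := (hasDerivAt_id G).sub_const 1
    have h2 : HasDerivAt (fun x : ℝ => x ^ (D+1)) ((D+1 : ℕ) * G ^ D) G := by
      simpa using hasDerivAt_pow (D+1) G
    have hne : G ^ (D+1) ≠ 0 := pow_ne_zero _ hGpos.ne'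
    have := h1.div h2 hne
    refine this.congr_deriv ?_
    have hG0 : G ≠ 0 := hGpos.ne'
    rw [div_eq_div_iff (pow_ne_zero _ hne) (pow_ne_zero _ hG0)]; push_cast
    ring
  -- φ 1 = 0
  have hφ1 : φ 1 = 0 := by simp [hφdef]
  -- φ b = gc
  have hφb : φ b = gc := by
    rw [hφdef, hbdef, hgcdef]
    have h1 : ((D:ℝ)+1) ≠ 0 := by linarith
    have h2 : (D:ℝ) ≠ 0 := hD0.ne'
    simp only [div_pow]
    rw [div_eq_div_iff (by positivity) (by positivity)]
    field_simp
    ring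
  -- strict monotonicity of φ on [1, b]
  have hmono : StrictMonoOn φ (Set.Icc 1 b) := by
    apply strictMonoOn_of_deriv_pos (convex_Icc 1 b)
    · apply ContinuousOn.div
      · fun_prop
      · fun_prop
      · intro x hx
        exact pow_ne_zero _ (by linarith [hx.1] : x ≠ 0)
    · intro x hx
      rw [interior_Icc] at hx
      have hx0 : (0:ℝ) < x := by linarith [hx.1]
      rw [(hder x hx0).deriv]
      apply div_pos
      · have := hx.2
        rw [hbdef, lt_div_iff₀ hD0] at this
        nlinarith
      · positivity
  -- G_LO is a right inverse of φ
  have hphiG : ∀ x ∈ Set.Icc (0:ℝ) gc, φ (G_LO x) = x := by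
    intro x hx
    obtain ⟨hmem, heq⟩ := hG x hx
    have h1 : (1:ℝ) ≤ G_LO x := hmem.1
    have hA : (G_LO x) ^ (D+1) ≠ 0 := pow_ne_zero _ (by linarith)
    rw [hφdef]
    simp only
    rw [div_eq_iff hA]
    linarith [heq]
  have hGmem : ∀ x ∈ Set.Icc (0:ℝ) gc, G_LO x ∈ Set.Icc (1:ℝ) b := fun x hx => (hG x hx).1
  -- G_LO is a left inverse of φ
  have hinv : ∀ y ∈ Set.Icc (1:ℝ) b, G_LO (φ y) = y := by
    intro y hy
    have hmem1 : (1:ℝ) ∈ Set.Icc (1:ℝ) b := ⟨le_refl _, le_of_lt hb1⟩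
    have hmemb : b ∈ Set.Icc (1:ℝ) b := ⟨le_of_lt hb1, le_refl _⟩
    have hφy : φ y ∈ Set.Icc (0:ℝ) gc := by
      constructor
      · rw [← hφ1]; exact hmono.monotoneOn hmem1 hy hy.1
      · rw [← hφb]; exact hmono.monotoneOn hy hmemb hy.2
    exact hmono.injOn (hGmem _ hφy) hy (hphiG _ hφy)
  -- main body
  intro g hg
  have hgIcc : g ∈ Set.Icc (0:ℝ) gc := ⟨le_of_lt hg.1, le_of_lt hg.2⟩
  obtain ⟨hG0mem, heq⟩ := hG g hgIcc
  set G0 : ℝ := G_LO g with hG0def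
  have hφG0 : φ G0 = g := hphiG g hgIcc
  have hG0Ioo : G0 ∈ Set.Ioo (1:ℝ) b := by
    constructor
    · rcases lt_or_eq_of_le hG0mem.1 with h | h
      · exact h
      · exfalso; rw [← h, hφ1] at hφG0; linarith [hg.1, hφG0]
    · rcases lt_or_eq_of_le hG0mem.2 with h | h
      · exact h
      · exfalso; rw [h, hφb] at hφG0; linarith [hg.2, hφG0]
  -- the algebraic identity
  have heq2 : 1 - g * D * G0 ^ (D+1) = ((D:ℝ)+1) - D * G0 := by
    linear_combination (D:ℝ) * heq
  have hpos : (0:ℝ) < ((D:ℝ)+1) - D * G0 := by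
    have := hG0Ioo.2
    rw [hbdef, lt_div_iff₀ hD0] at this
    nlinarith
  refine ⟨heq2, by rw [heq2]; exact hpos, ?_⟩
  -- strict monotonicity of G_LO
  have hGmono : StrictMonoOn G_LO (Set.Ioo 0 gc) := by
    intro x hx y hy hxy
    by_contra h
    push_neg at h
    have hxI : x ∈ Set.Icc (0:ℝ) gc := ⟨le_of_lt hx.1, le_of_lt hx.2⟩
    have hyI : y ∈ Set.Icc (0:ℝ) gc := ⟨le_of_lt hy.1, le_of_lt hy.2⟩
    have := hmono.monotoneOn (hGmem y hyI) (hGmem x hxI) h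
    rw [hphiG x hxI, hphiG y hyI] at this
    linarith
  -- continuity at g
  have hcont : ContinuousAt G_LO g := by
    apply hGmono.continuousAt_of_image_mem_nhds (isOpen_Ioo.mem_nhds hg)
    have hsub : Set.Ioo (1:ℝ) b ⊆ G_LO '' Set.Ioo 0 gc := by
      intro y hy
      have hyI : y ∈ Set.Icc (1:ℝ) b := ⟨le_of_lt hy.1, le_of_lt hy.2⟩
      have hmem1 : (1:ℝ) ∈ Set.Icc (1:ℝ) b := ⟨le_refl _, le_of_lt hb1⟩
      have hmemb : b ∈ Set.Icc (1:ℝ) b := ⟨le_of_lt hb1, le_refl _⟩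
      refine ⟨φ y, ⟨?_, ?_⟩, hinv y hyI⟩
      · rw [← hφ1]; exact hmono hmem1 hyI hy.1
      · rw [← hφb]; exact hmono hyI hmemb hy.2
    exact Filter.mem_of_superset (isOpen_Ioo.mem_nhds hG0Ioo) hsub
  -- derivative via local inverse
  have heventually : ∀ᶠ x in nhds g, φ (G_LO x) = x :=
    Filter.eventually_of_mem (isOpen_Ioo.mem_nhds hg)
      (fun x hx => hphiG x ⟨le_of_lt hx.1, le_of_lt hx.2⟩)
  have hG0pos : (0:ℝ) < G0 := by linarith [hG0Ioo.1]
  have hf'pos : (0:ℝ) < (((D:ℝ)+1) - D*G0)/G0^(D+2) := div_pos hpos (by positivity)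
  have hd := HasDerivAt.of_local_left_inverse hcont
    (by rw [← hG0def]; exact hder G0 hG0pos) (ne_of_gt hf'pos) heventually
  rw [heq2]; rw [inv_div] at hd
  exact hd
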